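/- Let G be a connected finite simple graph on n nodes, let s ∈ [0,1/n)ⁿ be fixed inputs, and let a = frac(∇·b) with b = (b_e) i.i.d. uniform on [0,1). Then the effective inputs s̃_i = frac(s_i + a_i) are uniformly distributed on the set {x ∈ [0,1)ⁿ : frac(Σ_i x_i) = Σ_i s_i}. -/

import Mathlib

open MeasureTheory ProbabilityTheory

/-- The edge set of a simple graph `G`, as ordered pairs `(i, j)` with `i < j`. -/
abbrev OrientedEdges {V : Type*} [LinearOrder V] (G : SimpleGraph V) : Type _ :=
  {p : V × V // p.1 < p.2 ∧ G.Adj p.1 p.2}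

/-- The oriented incidence matrix of a simple graph. -/
def incidenceMatrix {V : Type*} [LinearOrder V] (G : SimpleGraph V) :
    Matrix V (OrientedEdges G) ℝ :=
  fun i e => if i = e.val.1 then 1 else if i = e.val.2 then -1 else 0

/-! ### Auxiliary lemmas -/

private lemma coe_fract' (x : ℝ) : ((Int.fract x : ℝ) : AddCircle (1:ℝ)) = (x : AddCircle (1:ℝ)) := by
  conv_rhs => rw [← Int.fract_add_floor x]
  rw [AddCircle.coe_add]
  have : ((⌊x⌋ : ℝ) : AddCircle (1:ℝ)) = 0 :=
    (AddCircle.coe_eq_zero_iff _).mpr ⟨⌊x⌋, by simp⟩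
  simp [this]

private lemma coe_sum' {ι : Type*} [Fintype ι] (f : ι → ℝ) :
    ((∑ i, f i : ℝ) : AddCircle (1:ℝ)) = ∑ i, (f i : AddCircle (1:ℝ)) :=
  map_sum (QuotientAddGroup.mk' _) f Finset.univ

private lemma coe_int_zero (m : ℤ) : ((m : ℝ) : AddCircle (1:ℝ)) = 0 :=
  (AddCircle.coe_eq_zero_iff _).mpr ⟨m, by simp⟩

/-- The joint law of finitely many independent random variables is the product of marginals. -/
private lemma indep_map_pi {ι Ω : Type*} [Fintype ι] {κ : ι → Type*}
    [mΩ : MeasurableSpace Ω] {μ : Measure Ω} [IsProbabilityMeasure μ]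
    [m : ∀ i, MeasurableSpace (κ i)] (f : ∀ i, Ω → κ i) (hf : ∀ i, Measurable (f i))
    (hind : iIndepFun f μ) :
    Measure.map (fun ω i => f i ω) μ = Measure.pi (fun i => Measure.map (f i) μ) := by
  haveI : ∀ i, IsProbabilityMeasure (Measure.map (f i) μ) :=
    fun i => Measure.isProbabilityMeasure_map (hf i).aemeasurable
  have hF : Measurable (fun ω i => f i ω) := measurable_pi_lambda _ hf
  refine (Measure.pi_eq fun t ht => ?_).symm
  rw [Measure.map_apply hF (MeasurableSet.univ_pi ht)]
  have hpre : (fun ω i => f i ω) ⁻¹' (Set.univ.pi t) = ⋂ i, f i ⁻¹' t i := by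
    ext ω; simp [Set.mem_univ_pi]
  rw [hpre, hind.meas_iInter (fun i => ⟨t i, ht i, rfl⟩)]
  exact Finset.prod_congr rfl fun i _ => (Measure.map_apply (hf i) (ht i)).symm

section Graph
variable {V : Type*} [Fintype V] [LinearOrder V] (G : SimpleGraph V) [DecidableRel G.Adj]

omit [DecidableRel G.Adj] in
private lemma colsum (e : OrientedEdges G) : ∑ i, incidenceMatrix G i e = 0 := by
  have hne : e.val.1 ≠ e.val.2 := ne_of_lt e.prop.1
  have : ∀ i, incidenceMatrix G i e =
      (if i = e.val.1 then (1:ℝ) else 0) + (if i = e.val.2 then (-1:ℝ) else 0) := by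
    intro i
    by_cases h1 : i = e.val.1 <;> by_cases h2 : i = e.val.2 <;>
      simp_all [incidenceMatrix]
  simp only [this, Finset.sum_add_distrib, Finset.sum_ite_eq', Finset.mem_univ, if_true]
  ring

private lemma pair_reachable {u v : V} (h : G.Reachable u v) :
    ∃ t : OrientedEdges G → ℝ, ∀ i, ∑ e, incidenceMatrix G i e * t e =
      (if i = u then 1 else 0) - (if i = v then 1 else 0) := by
  classical
  obtain ⟨w⟩ := h
  induction w with
  | nil => exact ⟨0, fun i => by simp⟩
  | @cons u b v hadj p ih =>
    obtain ⟨t, ht⟩ := ih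
    have hub : u ≠ b := hadj.ne
    obtain ⟨t0, ht0⟩ : ∃ t0 : OrientedEdges G → ℝ,
        ∀ i, ∑ e, incidenceMatrix G i e * t0 e =
          (if i = u then 1 else 0) - (if i = b then 1 else 0) := by
      rcases hub.lt_or_gt with hlt | hlt
      · refine ⟨fun e => if e = ⟨(u, b), hlt, hadj⟩ then 1 else 0, fun i => ?_⟩
        simp only [mul_ite, mul_one, mul_zero, Finset.sum_ite_eq', Finset.mem_univ, if_true]
        by_cases h1 : i = u <;> by_cases h2 : i = b <;>
          simp_all [incidenceMatrix]
      · refine ⟨fun e => if e = ⟨(b, u), hlt, hadj.symm⟩ then -1 else 0, fun i => ?_⟩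
        simp only [mul_ite, mul_neg, mul_one, mul_zero, Finset.sum_ite_eq', Finset.mem_univ,
          if_true]
        by_cases h1 : i = u <;> by_cases h2 : i = b <;>
          simp_all [incidenceMatrix]
    refine ⟨t0 + t, fun i => ?_⟩
    have : ∀ e, incidenceMatrix G i e * (t0 + t) e =
        incidenceMatrix G i e * t0 e + incidenceMatrix G i e * t e := by
      intro e; simp [Pi.add_apply]; ring
    rw [Finset.sum_congr rfl fun e _ => this e, Finset.sum_add_distrib, ht0 i, ht i]
    ring

private lemma incidence_surj (hG : G.Connected) (x : V → ℝ) (hx : ∑ i, x i = 0) :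
    ∃ t : OrientedEdges G → ℝ, ∀ i, ∑ e, incidenceMatrix G i e * t e = x i := by
  classical
  haveI : Nonempty V := hG.nonempty
  set u0 : V := Classical.arbitrary V with hu0
  choose t ht using fun u => pair_reachable G (hG.preconnected u u0)
  refine ⟨fun e => ∑ u, x u * t u e, fun i => ?_⟩
  have swap : ∑ e, incidenceMatrix G i e * ∑ u, x u * t u e
      = ∑ u, x u * ∑ e, incidenceMatrix G i e * t u e := by
    simp_rw [Finset.mul_sum]
    rw [Finset.sum_comm]
    congr 1; ext u; congr 1; ext e; ring
  rw [swap]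
  have : ∀ u, x u * ∑ e, incidenceMatrix G i e * t u e
      = x u * (if i = u then 1 else 0) - x u * (if i = u0 then 1 else 0) := by
    intro u; rw [ht u i]; ring
  rw [Finset.sum_congr rfl fun u _ => this u, Finset.sum_sub_distrib]
  have h1 : ∑ u, x u * (if i = u then (1:ℝ) else 0) = x i := by
    simp [mul_ite, Finset.sum_ite_eq]
  have h2 : ∑ u, x u * (if i = u0 then (1:ℝ) else 0) = 0 := by
    by_cases h : i = u0 <;> simp [h, ← Finset.sum_mul, hx]
  rw [h1, h2, sub_zero]

end Graph

/-- For a connected graph `G`, fixed inputs `s ∈ [0,1/n)ⁿ`, masks `a = frac(∇ ⬝ b)` with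
`b` i.i.d. uniform on `[0,1)`, the effective inputs `s̃ᵢ = frac(sᵢ + aᵢ)`, viewed in the
torus `(ℝ/ℤ)ⁿ`, are uniformly distributed on the coset
`{x : ∑ i, x i = ∑ i, s i}` of the subgroup `{∑ x i = 0}`: their law gives that coset
full measure and is invariant under translation by any element of the subgroup,
which characterizes the Haar measure of the coset. -/
theorem effective_inputs_uniform_on_coset
    {V : Type*} [Fintype V] [LinearOrder V]
    (G : SimpleGraph V) [DecidableRel G.Adj] (hG : G.Connected)
    (s : V → ℝ) (hs : ∀ i, s i ∈ Set.Ico (0 : ℝ) (1 / Fintype.card V))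
    {Ω : Type*} [MeasureSpace Ω] [IsProbabilityMeasure (ℙ : Measure Ω)]
    (B : Ω → OrientedEdges G → ℝ)
    (hBmeas : ∀ e, Measurable fun ω => B ω e)
    (hBindep : iIndepFun (fun e ω => B ω e) ℙ)
    (hBunif : ∀ e, Measure.map (fun ω => B ω e) ℙ = volume.restrict (Set.Ico (0:ℝ) 1))
    (a : Ω → V → ℝ)
    (ha : ∀ ω i, a ω i = Int.fract (∑ e, incidenceMatrix G i e * B ω e))
    (S : Ω → V → AddCircle (1 : ℝ))
    (hS : ∀ ω i, S ω i = ((s i + a ω i : ℝ) : AddCircle (1 : ℝ))) :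
    (Measure.map S ℙ)
        {x : V → AddCircle (1 : ℝ) | ∑ i, x i = ((∑ i, s i : ℝ) : AddCircle (1 : ℝ))} = 1 ∧
    ∀ h : V → AddCircle (1 : ℝ), (∑ i, h i = 0) →
      Measure.map (fun x => x + h) (Measure.map S ℙ) = Measure.map S ℙ := by
  classical
  haveI : Fact ((0:ℝ) < 1) := ⟨one_pos⟩
  -- integer incidence matrix
  set ε : V → OrientedEdges G → ℤ :=
    fun i e => if i = e.val.1 then 1 else if i = e.val.2 then -1 else 0 with hεdef
  have hε : ∀ i e, ((ε i e : ℤ) : ℝ) = incidenceMatrix G i e := by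
    intro i e; simp only [hεdef, incidenceMatrix]
    split_ifs <;> norm_num
  -- the torus-valued noise and the affine map
  set g : Ω → OrientedEdges G → AddCircle (1:ℝ) := fun ω e => ((B ω e : ℝ) : AddCircle (1:ℝ))
    with hgdef
  have hgmeas : Measurable g :=
    measurable_pi_lambda _ fun e => AddCircle.measurable_mk'.comp (hBmeas e)
  set ψ : (OrientedEdges G → AddCircle (1:ℝ)) → (V → AddCircle (1:ℝ)) :=
    fun y i => ((s i : ℝ) : AddCircle (1:ℝ)) + ∑ e, ε i e • y e with hψdef
  have hψmeas : Measurable ψ :=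
    measurable_pi_lambda _ fun i => Measurable.const_add (
      Finset.univ.measurable_sum fun e _ =>
        ((continuous_zsmul (ε i e)).measurable).comp (measurable_pi_apply e)) _
  have hψsum : ∀ (b : OrientedEdges G → ℝ) i,
      (∑ e, ε i e • ((b e : ℝ) : AddCircle (1:ℝ)))
        = ((∑ e, incidenceMatrix G i e * b e : ℝ) : AddCircle (1:ℝ)) := by
    intro b i
    rw [coe_sum']
    refine (Finset.sum_congr rfl fun e _ => ?_).symm
    rw [← hε, ← AddCircle.coe_zsmul, zsmul_eq_mul]
  have hψcoe : ∀ (b : OrientedEdges G → ℝ) i, ψ (fun e => ((b e : ℝ) : AddCircle (1:ℝ))) i =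
      ((s i + ∑ e, incidenceMatrix G i e * b e : ℝ) : AddCircle (1:ℝ)) := by
    intro b i
    simp only [hψdef]
    rw [hψsum b i, AddCircle.coe_add]
  have hScomp : S = ψ ∘ g := by
    funext ω; funext i
    rw [Function.comp_apply]
    have : g ω = fun e => ((B ω e : ℝ) : AddCircle (1:ℝ)) := rfl
    rw [this, hψcoe, hS ω i, ha ω i, AddCircle.coe_add, AddCircle.coe_add, coe_fract']
  have hSmeas : Measurable S := hScomp ▸ hψmeas.comp hgmeas
  -- Part 1
  have hsetmeas : MeasurableSet
      {x : V → AddCircle (1 : ℝ) | ∑ i, x i = ((∑ i, s i : ℝ) : AddCircle (1 : ℝ))} := by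
    have hsummeas : Measurable (fun x : V → AddCircle (1:ℝ) => ∑ i, x i) :=
      Finset.univ.measurable_sum fun i _ => measurable_pi_apply i
    exact hsummeas (measurableSet_singleton _)
  constructor
  · rw [Measure.map_apply hSmeas hsetmeas]
    have hpre : S ⁻¹' {x : V → AddCircle (1 : ℝ) |
        ∑ i, x i = ((∑ i, s i : ℝ) : AddCircle (1 : ℝ))} = Set.univ := by
      ext ω
      simp only [Set.mem_preimage, Set.mem_setOf_eq, Set.mem_univ, iff_true]
      have h1 : ∀ i, S ω i =
          ((s i + ∑ e, incidenceMatrix G i e * B ω e : ℝ) : AddCircle (1:ℝ)) := by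
        intro i
        rw [hS ω i, ha ω i, AddCircle.coe_add, AddCircle.coe_add, coe_fract']
      calc ∑ i, S ω i
          = ∑ i, ((s i + ∑ e, incidenceMatrix G i e * B ω e : ℝ) : AddCircle (1:ℝ)) :=
            Finset.sum_congr rfl fun i _ => h1 i
        _ = ((∑ i, (s i + ∑ e, incidenceMatrix G i e * B ω e) : ℝ) : AddCircle (1:ℝ)) :=
            (coe_sum' _).symm
        _ = ((∑ i, s i : ℝ) : AddCircle (1:ℝ)) := by
            congr 1
            rw [Finset.sum_add_distrib]
            have hzero : ∑ i, ∑ e, incidenceMatrix G i e * B ω e = 0 := by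
              rw [Finset.sum_comm]
              have : ∀ e : OrientedEdges G,
                  ∑ i, incidenceMatrix G i e * B ω e = 0 := by
                intro e
                rw [← Finset.sum_mul, colsum, zero_mul]
              simp [this]
            rw [hzero, add_zero]
    rw [hpre]
    exact measure_univ
  -- Part 2
  · intro h hh
    -- lift h to the reals
    have hlift : ∀ i, ∃ r : ℝ, (r : AddCircle (1:ℝ)) = h i :=
      fun i => QuotientAddGroup.mk_surjective (h i)
    choose hr hhr using hlift
    obtain ⟨m, hm⟩ : ∃ m : ℤ, (m : ℝ) = ∑ i, hr i := by
      have h0 : ((∑ i, hr i : ℝ) : AddCircle (1:ℝ)) = 0 := by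
        rw [coe_sum']
        simp_rw [hhr]
        exact hh
      obtain ⟨n, hn⟩ := (AddCircle.coe_eq_zero_iff _).mp h0
      exact ⟨n, by simpa [zsmul_eq_mul] using hn⟩
    haveI : Nonempty V := hG.nonempty
    set u0 : V := Classical.arbitrary V with hu0
    set x : V → ℝ := fun i => hr i - if i = u0 then (m:ℝ) else 0 with hxdef
    have hxsum : ∑ i, x i = 0 := by
      simp only [hxdef, Finset.sum_sub_distrib, Finset.sum_ite_eq', Finset.mem_univ, if_true]
      rw [← hm, sub_self]
    obtain ⟨t, htt⟩ := incidence_surj G hG x hxsum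
    have hth : ∀ i, ((∑ e, incidenceMatrix G i e * t e : ℝ) : AddCircle (1:ℝ)) = h i := by
      intro i
      rw [htt i, hxdef]
      have : ((hr i - if i = u0 then (m:ℝ) else 0 : ℝ) : AddCircle (1:ℝ))
          = ((hr i : ℝ) : AddCircle (1:ℝ)) - ((if i = u0 then (m:ℝ) else 0 : ℝ) : AddCircle (1:ℝ)) :=
        map_sub (QuotientAddGroup.mk' _) _ _
      rw [this, hhr]
      have : ((if i = u0 then (m:ℝ) else 0 : ℝ) : AddCircle (1:ℝ)) = 0 := by
        by_cases hi : i = u0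
        · simp only [hi, if_true]; exact coe_int_zero m
        · simp [hi]
      rw [this, sub_zero]
    set τ : OrientedEdges G → AddCircle (1:ℝ) := fun e => ((t e : ℝ) : AddCircle (1:ℝ)) with hτdef
    -- translation on the output corresponds to translation on the torus noise
    have hkey : (fun x => x + h) ∘ ψ = ψ ∘ (fun y => y + τ) := by
      funext y; funext i
      simp only [Function.comp_apply, Pi.add_apply, hψdef]
      simp_rw [smul_add, Finset.sum_add_distrib]
      have : ∑ e, ε i e • τ e = h i := by
        rw [hτdef]
        simp only []
        rw [hψsum t i, hth i]
      rw [this]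
      abel
    -- laws
    have hglaw : Measure.map g ℙ = Measure.pi (fun _ : OrientedEdges G =>
        (volume : Measure (AddCircle (1:ℝ)))) := by
      have hind2 : iIndepFun
          (fun e ω => ((B ω e : ℝ) : AddCircle (1:ℝ))) ℙ :=
        hBindep.comp (fun _ => ((↑) : ℝ → AddCircle (1:ℝ)))
          (fun _ => AddCircle.measurable_mk')
      have hjoint := indep_map_pi
        (fun e ω => ((B ω e : ℝ) : AddCircle (1:ℝ)))
        (fun e => AddCircle.measurable_mk'.comp (hBmeas e)) hind2
      have hmarg : ∀ e : OrientedEdges G,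
          Measure.map (fun ω => ((B ω e : ℝ) : AddCircle (1:ℝ))) ℙ = volume := by
        intro e
        have hcomp : (fun ω => ((B ω e : ℝ) : AddCircle (1:ℝ)))
            = (((↑) : ℝ → AddCircle (1:ℝ)) ∘ fun ω => B ω e) := rfl
        rw [hcomp, ← Measure.map_map AddCircle.measurable_mk' (hBmeas e), hBunif e,
          Measure.restrict_congr_set Ico_ae_eq_Ioc]
        simpa using (AddCircle.measurePreserving_mk (T := 1) 0).map_eq
      rw [hgdef]
      rw [hjoint]
      exact congrArg Measure.pi (funext fun e => hmarg e)
    have htransmeas : Measurable (fun x : V → AddCircle (1:ℝ) => x + h) :=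
      (continuous_id.add continuous_const).measurable
    have htransmeas2 : Measurable (fun y : OrientedEdges G → AddCircle (1:ℝ) => y + τ) :=
      (continuous_id.add continuous_const).measurable
    have hinv : Measure.map (fun y : OrientedEdges G → AddCircle (1:ℝ) => y + τ)
        (Measure.pi fun _ => (volume : Measure (AddCircle (1:ℝ))))
        = Measure.pi fun _ => (volume : Measure (AddCircle (1:ℝ))) := by
      have hmp := measurePreserving_pi
        (fun _ : OrientedEdges G => (volume : Measure (AddCircle (1:ℝ))))
        (fun _ : OrientedEdges G => (volume : Measure (AddCircle (1:ℝ))))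
        (f := fun e z => z + τ e)
        (fun e => measurePreserving_add_right volume (τ e))
      have heq : (fun y : OrientedEdges G → AddCircle (1:ℝ) => y + τ)
          = fun a i => a i + τ i := rfl
      rw [heq]
      exact hmp.map_eq
    calc Measure.map (fun x => x + h) (Measure.map S ℙ)
        = Measure.map (fun x => x + h) (Measure.map ψ (Measure.map g ℙ)) := by
          rw [hScomp, ← Measure.map_map hψmeas hgmeas]
      _ = Measure.map ((fun x => x + h) ∘ ψ) (Measure.map g ℙ) :=
          Measure.map_map htransmeas hψmeas
      _ = Measure.map (ψ ∘ (fun y => y + τ)) (Measure.map g ℙ) := by rw [hkey]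
      _ = Measure.map ψ (Measure.map (fun y => y + τ) (Measure.map g ℙ)) :=
          (Measure.map_map hψmeas htransmeas2).symm
      _ = Measure.map ψ (Measure.map g ℙ) := by rw [hglaw, hinv]
      _ = Measure.map S ℙ := by rw [hScomp, ← Measure.map_map hψmeas hgmeas]
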